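/- Let V : (0,∞) → ℝ be convex with V(s) ≥ (K−s)^+ for all s > 0, V(s) = K − s for all s in some nonempty interval (0, c) with c < K, and V(s) > 0 for all s > 0. Then the set {s > 0 : V(s) = K − s} is an interval of the form (0, A*] for some A* ∈ [c, K). -/

import Mathlib

open Real Set

theorem stmt6 (K : ℝ) (hK : 0 < K) (V : ℝ → ℝ)
    (hconv : ConvexOn ℝ (Set.Ioi 0) V)
    (hge : ∀ s ∈ Set.Ioi (0 : ℝ), max (K - s) 0 ≤ V s)
    (c : ℝ) (hc0 : 0 < c) (hcK : c < K)
    (heq : ∀ s ∈ Set.Ioo (0 : ℝ) c, V s = K - s)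
    (hpos : ∀ s ∈ Set.Ioi (0 : ℝ), 0 < V s) :
    ∃ A ∈ Set.Ico c K, {s : ℝ | 0 < s ∧ V s = K - s} = Set.Ioc 0 A := by
  set S : Set ℝ := {s : ℝ | 0 < s ∧ V s = K - s} with hSdef
  -- chord inequality
  have hchord : ∀ u t w : ℝ, 0 < u → u < t → t < w →
      (w - u) * V t ≤ (w - t) * V u + (t - u) * V w := by
    intro u t w hu hut htw
    have hwu : (0:ℝ) < w - u := by linarith
    have h := hconv.2 (Set.mem_Ioi.mpr hu) (Set.mem_Ioi.mpr (by linarith : (0:ℝ) < w))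
      (show (0:ℝ) ≤ (w - t)/(w - u) from div_nonneg (by linarith) hwu.le)
      (show (0:ℝ) ≤ (t - u)/(w - u) from div_nonneg (by linarith) hwu.le)
      (show (w - t)/(w - u) + (t - u)/(w - u) = 1 by field_simp; ring)
    have harg : (w - t)/(w - u) * u + (t - u)/(w - u) * w = t := by
      field_simp; ring
    simp only [smul_eq_mul] at h
    rw [harg] at h
    have h' := mul_le_mul_of_nonneg_left h hwu.le
    have hcalc : (w - u) * ((w - t)/(w - u) * V u + (t - u)/(w - u) * V w)
        = (w - t) * V u + (t - u) * V w := by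
      field_simp
    linarith [hcalc ▸ h']
  -- S is downward closed (given 0 < t)
  have hdown : ∀ t w : ℝ, 0 < t → t < w → V w = K - w → V t = K - t := by
    intro t w ht htw hVw
    set u := min c t / 2 with hu
    have hu0 : 0 < u := by positivity
    have huc : u < c := by
      have := min_le_left c t; simp only [hu]; linarith
    have hut : u < t := by
      have := min_le_right c t; simp only [hu]; linarith
    have hVu : V u = K - u := heq u ⟨hu0, huc⟩
    have h := hchord u t w hu0 hut htw
    rw [hVu, hVw] at h
    have h1 : V t ≤ K - t := by nlinarith
    have h2 : K - t ≤ V t := le_trans (le_max_left _ _) (hge t (Set.mem_Ioi.mpr ht))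
    linarith
  have hne : (c/2) ∈ S := ⟨by positivity, heq _ ⟨by positivity, by linarith⟩⟩
  have hbdd : BddAbove S := by
    refine ⟨K, fun s hs => ?_⟩
    have := hpos s (Set.mem_Ioi.mpr hs.1)
    rw [hs.2] at this; linarith
  set A := sSup S with hA
  have hc2A : c/2 ≤ A := le_csSup hbdd hne
  have hA0 : 0 < A := by linarith
  -- V A = K - A
  have hVA : V A = K - A := by
    have hgeA : K - A ≤ V A := le_trans (le_max_left _ _) (hge A (Set.mem_Ioi.mpr hA0))
    by_contra hne'
    have hlt : K - A < V A := lt_of_le_of_ne hgeA (fun h => hne' h.symm)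
    set w := A + 1 with hw
    have hw0 : (0:ℝ) < w := by linarith
    have hVw : K - w ≤ V w := le_trans (le_max_left _ _) (hge w (Set.mem_Ioi.mpr hw0))
    set D : ℝ := V w + w - K + 1 with hD
    have hD0 : 0 < D := by simp only [hD]; linarith
    set δ : ℝ := V A - (K - A) with hδ
    have hδ0 : 0 < δ := by simp only [hδ]; linarith
    set ε : ℝ := δ / D with hε
    have hε0 : 0 < ε := by positivity
    obtain ⟨s, hsS, hslt⟩ := exists_lt_of_lt_csSup ⟨_, hne⟩ (by linarith : A - ε < A)
    have hsA : s ≤ A := le_csSup hbdd hsS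
    rcases eq_or_lt_of_le hsA with rfl | hsA'
    · rw [hsS.2] at hlt; linarith
    · have h := hchord s A w hsS.1 hsA' (by simp only [hw]; linarith)
      rw [hsS.2] at h
      have hεD : ε * D = δ := div_mul_cancel₀ δ (ne_of_gt hD0)
      have hd1 : A - s < ε := by linarith
      have hd0 : 0 < A - s := by linarith
      -- h : (w - s) * V A ≤ (w - A) * (K - s) + (A - s) * V w
      have hwA : w - A = 1 := by simp only [hw]; ring
      have hws : w - s = 1 + (A - s) := by simp only [hw]; ring
      rw [hwA, hws] at h
      -- δ ≤ (A - s) * (1 + V w - V A) ≤ (A-s)*(V w + w - K) < ε * D = δ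
      have key : δ ≤ (A - s) * (V w + w - K) := by nlinarith
      have : (A - s) * (V w + w - K) < ε * D := by
        have hfac : 0 ≤ V w + w - K := by linarith
        have : (A - s) * (V w + w - K) ≤ ε * (V w + w - K) :=
          mul_le_mul_of_nonneg_right hd1.le hfac
        have h2 : ε * (V w + w - K) < ε * D := by
          apply mul_lt_mul_of_pos_left _ hε0
          simp only [hD]; linarith
        linarith
      linarith [hεD]
  have hAS : A ∈ S := ⟨hA0, hVA⟩
  have hAK : A < K := by
    have := hpos A (Set.mem_Ioi.mpr hA0)
    rw [hVA] at this; linarith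
  have hcA : c ≤ A := by
    by_contra hca
    push_neg at hca
    have ht : (A + c)/2 ∈ S := by
      refine ⟨by linarith, heq _ ⟨by linarith, by linarith⟩⟩
    have := le_csSup hbdd ht
    linarith
  refine ⟨A, ⟨hcA, hAK⟩, ?_⟩
  ext s
  simp only [Set.mem_setOf_eq, Set.mem_Ioc]
  constructor
  · intro hs
    exact ⟨hs.1, le_csSup hbdd hs⟩
  · rintro ⟨hs0, hsA⟩
    rcases eq_or_lt_of_le hsA with rfl | hlt
    · exact ⟨hs0, hVA⟩
    · exact ⟨hs0, hdown s A hs0 hlt hVA⟩
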